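/- Let r ≥ 7 be an odd integer, and set s = (1, 1+r, 1+2r, 1+4r) and s' = (1, 1−r, 1−2r, 1−4r). Then there exist no integer ℓ coprime to r², no permutation σ of {1,2,3,4}, and no signs ε_1,…,ε_4 ∈ {±1} such that ℓ·ε_j·s_j ≡ s'_{σ(j)} (mod r²) for every j. -/

import Mathlib

private lemma aux_seven : ∀ σ : Equiv.Perm (Fin 4),
    ¬ ∀ j : Fin 4, (7 : ℤ) ∣ ((![0,1,2,4] : Fin 4 → ℤ) j +
      (![0,1,2,4] : Fin 4 → ℤ) (σ j) - (![0,1,2,4] : Fin 4 → ℤ) (σ 0)) := by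
  decide

theorem q_odd_pair_not_isometric (r : ℕ) (hr : 7 ≤ r) (hrodd : Odd r) :
    ¬ ∃ (ℓ : ℤ) (σ : Equiv.Perm (Fin 4)) (ε : Fin 4 → ℤ),
        IsCoprime ℓ ((r : ℤ) ^ 2) ∧ (∀ j, ε j = 1 ∨ ε j = -1) ∧
        ∀ j, ((r : ℤ) ^ 2) ∣
          ℓ * ε j * (![1, 1 + r, 1 + 2 * r, 1 + 4 * r] : Fin 4 → ℤ) j -
            (![1, 1 - (r : ℤ), 1 - 2 * (r : ℤ), 1 - 4 * (r : ℤ)] : Fin 4 → ℤ) (σ j) := by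
  rintro ⟨ℓ, σ, ε, -, hε, hdvd⟩
  set R : ℤ := (r : ℤ) with hR
  have hR7 : (7 : ℤ) ≤ R := by simp only [hR]; exact_mod_cast hr
  have hR0 : R ≠ 0 := by omega
  set a : Fin 4 → ℤ := ![0,1,2,4] with ha
  set v : Fin 4 → ℤ := ![1, 1 + R, 1 + 2 * R, 1 + 4 * R] with hv
  set w : Fin 4 → ℤ := ![1, 1 - R, 1 - 2 * R, 1 - 4 * R] with hw
  have hva : ∀ x, v x = 1 + a x * R := by
    intro x; fin_cases x <;> simp [hv, ha]
  have hwa : ∀ x, w x = 1 - a x * R := by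
    intro x; fin_cases x <;> simp [hw, ha]
  have he0 : ε 0 * ε 0 = 1 := by rcases hε 0 with h | h <;> rw [h] <;> ring
  have hd0 : R ^ 2 ∣ ℓ * ε 0 - w (σ 0) := by
    have := hdvd 0
    simpa [hv, hw] using this
  -- combined congruence with ℓ eliminated
  have hcomb : ∀ j, R ^ 2 ∣ (ε 0 * ε j) * v j * w (σ 0) - w (σ j) := by
    intro j
    obtain ⟨k1, hk1⟩ := hd0
    obtain ⟨k2, hk2⟩ := hdvd j
    exact ⟨k2 - ε 0 * ε j * v j * k1, by
      linear_combination hk2 - (ε 0 * ε j * v j) * hk1 + (ℓ * ε j * v j) * he0⟩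
  -- the sign product must be 1, and then r ∣ c j
  have hc : ∀ j, R ∣ (a j + a (σ j) - a (σ 0)) := by
    intro j
    have hδ : ε 0 * ε j = 1 ∨ ε 0 * ε j = -1 := by
      rcases hε 0 with h0 | h0 <;> rcases hε j with hj | hj <;>
        rw [h0, hj] <;> norm_num
    obtain ⟨k, hk⟩ := hcomb j
    rw [hva j, hwa (σ j), hwa (σ 0)] at hk
    rcases hδ with hδ | hδ
    · rw [hδ] at hk
      have h2 : R * R ∣ (a j + a (σ j) - a (σ 0)) * R := by
        exact ⟨k + a j * a (σ 0), by linear_combination hk⟩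
      exact (mul_dvd_mul_iff_right hR0).mp h2
    · exfalso
      rw [hδ] at hk
      have h2 : R ∣ 2 := ⟨-(R * k) - (a j - a (σ 0) - a (σ j)) + a j * a (σ 0) * R,
        by linear_combination -hk⟩
      have := Int.le_of_dvd (by norm_num) h2
      omega
  -- sum over j
  have hsum : R ∣ 14 - 4 * a (σ 0) := by
    have h1 : ∑ j, (a j + a (σ j) - a (σ 0)) = 14 - 4 * a (σ 0) := by
      have h2 : ∑ j, a (σ j) = ∑ j, a j := Equiv.sum_comp σ a
      have h3 : ∑ j : Fin 4, a j = 7 := by simp [ha, Fin.sum_univ_four]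
      rw [Finset.sum_sub_distrib, Finset.sum_add_distrib, h2, h3]
      simp
    have := Finset.dvd_sum (s := Finset.univ) (fun j _ => hc j)
    rwa [h1] at this
  have ha0 : a (σ 0) = 0 ∨ a (σ 0) = 1 ∨ a (σ 0) = 2 ∨ a (σ 0) = 4 := by
    have : ∀ x : Fin 4, (![0,1,2,4] : Fin 4 → ℤ) x = 0 ∨
        (![0,1,2,4] : Fin 4 → ℤ) x = 1 ∨ (![0,1,2,4] : Fin 4 → ℤ) x = 2 ∨
        (![0,1,2,4] : Fin 4 → ℤ) x = 4 := by decide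
    simpa [ha] using this (σ 0)
  obtain ⟨t, ht⟩ := hrodd
  by_cases h7 : r = 7
  · -- r = 7 : finite check
    subst h7
    exact aux_seven σ (by simpa [ha, hR] using hc)
  · -- r ≥ 9 : each c j must be 0, but their sum is nonzero
    have hR9 : (9 : ℤ) ≤ R := by
      have : r ≠ 7 := h7
      omega
    have hbound : ∀ x y z : Fin 4, |(![0,1,2,4] : Fin 4 → ℤ) x +
        (![0,1,2,4] : Fin 4 → ℤ) y - (![0,1,2,4] : Fin 4 → ℤ) z| ≤ 8 := by decide
    have hzero : ∀ j, a j + a (σ j) - a (σ 0) = 0 := by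
      intro j
      refine Int.eq_zero_of_abs_lt_dvd (hc j) ?_
      have := hbound j (σ j) (σ 0)
      simp only [ha] at *
      omega
    have h0' : (0 : ℤ) = 14 - 4 * a (σ 0) := by
      have h1 : ∑ j, (a j + a (σ j) - a (σ 0)) = 0 := by
        simp [hzero]
      have h2 : ∑ j, a (σ j) = ∑ j, a j := Equiv.sum_comp σ a
      have h3 : ∑ j : Fin 4, a j = 7 := by simp [ha, Fin.sum_univ_four]
      rw [Finset.sum_sub_distrib, Finset.sum_add_distrib, h2, h3] at h1
      simp at h1
      omega
    omega
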